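/- Let S = k[[t,u]] be a power series ring over a field k and R = k[[t^3, t^4, t^5, u]]. Then the ideal I = (t^3, t^4) of R satisfies (mI : u) = I (so I is m-full) but I is not integrally closed, where m is the maximal ideal of R. -/

import Mathlib

open IsLocalRing MvPowerSeries

set_option synthInstance.maxHeartbeats 1000000
set_option maxHeartbeats 1000000

/-- An ideal `I` is integrally closed if every element satisfying an equation of integral
dependence over `I` belongs to `I`. -/
def intClosedIdeal {A : Type*} [CommRing A] (I : Ideal A) : Prop :=
  ∀ x : A, (∃ n : ℕ, 0 < n ∧ ∃ c : ℕ → A, (∀ i, 1 ≤ i → i ≤ n → c i ∈ I ^ i) ∧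
      x ^ n + ∑ i ∈ Finset.Icc 1 n, c i * x ^ (n - i) = 0) → x ∈ I

/-- Let `k` be a field, `S = k[[t, u]]` and `R = k[[t³, t⁴, t⁵, u]] ⊆ S` (power series
all of whose monomials `tⁱuʲ` have `i` in the semigroup generated by `3, 4, 5`). Then the
ideal `I = (t³, t⁴)` of `R` satisfies `(mI : u) = I` (so `I` is `m`-full), but `I` is not
integrally closed, where `m` is the maximal ideal of `R`. -/
theorem stmt16 (k : Type*) [Field k]
    (R : Subalgebra k (MvPowerSeries (Fin 2) k))
    (hR : ∀ f : MvPowerSeries (Fin 2) k, f ∈ R ↔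
      ∀ d : Fin 2 →₀ ℕ, (d 0) ∉ AddSubmonoid.closure ({3, 4, 5} : Set ℕ) →
        MvPowerSeries.coeff d f = 0)
    [IsLocalRing R]
    (I : Ideal R)
    (hI : I = Ideal.span {x : R | (x : MvPowerSeries (Fin 2) k) = X 0 ^ 3 ∨
      (x : MvPowerSeries (Fin 2) k) = X 0 ^ 4}) :
    Submodule.colon (maximalIdeal R * I)
        (Ideal.span {x : R | (x : MvPowerSeries (Fin 2) k) = X 1}) = I ∧
      ¬ intClosedIdeal I := by
  classical
  set G := AddSubmonoid.closure ({3, 4, 5} : Set ℕ) with hG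
  -- semigroup facts
  have h3G : (3 : ℕ) ∈ G := AddSubmonoid.subset_closure (by norm_num)
  have h4G : (4 : ℕ) ∈ G := AddSubmonoid.subset_closure (by norm_num)
  have h5G : (5 : ℕ) ∈ G := AddSubmonoid.subset_closure (by norm_num)
  have hlow : ∀ n ∈ G, n = 0 ∨ 3 ≤ n := by
    intro n hn
    induction hn using AddSubmonoid.closure_induction with
    | mem x hx =>
      simp only [Set.mem_insert_iff, Set.mem_singleton_iff] at hx
      omega
    | zero => omega
    | add x y _ _ hx hy => omega
  have h1G : (1 : ℕ) ∉ G := fun h => by rcases hlow 1 h with h | h <;> omega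
  have h2G : (2 : ℕ) ∉ G := fun h => by rcases hlow 2 h with h | h <;> omega
  -- elements
  have hXpow : ∀ n : ℕ, n ∈ G → (X 0 ^ n : MvPowerSeries (Fin 2) k) ∈ R := by
    intro n hn
    rw [hR]
    intro d hd
    rw [X_pow_eq, coeff_monomial]
    split
    · next h => exfalso; apply hd; rw [h]; simpa using hn
    · rfl
  have hXu : (X 1 : MvPowerSeries (Fin 2) k) ∈ R := by
    rw [hR]
    intro d hd
    rw [show (X 1 : MvPowerSeries (Fin 2) k) = X 1 ^ 1 by rw [pow_one], X_pow_eq,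
      coeff_monomial]
    split
    · next h => exfalso; apply hd; rw [h]; simpa using zero_mem G
    · rfl
  set e3 : R := ⟨X 0 ^ 3, hXpow 3 h3G⟩ with he3
  set e4 : R := ⟨X 0 ^ 4, hXpow 4 h4G⟩ with he4
  set e5 : R := ⟨X 0 ^ 5, hXpow 5 h5G⟩ with he5
  set eu : R := ⟨X 1, hXu⟩ with heu
  have hIset : {x : R | (x : MvPowerSeries (Fin 2) k) = X 0 ^ 3 ∨
      (x : MvPowerSeries (Fin 2) k) = X 0 ^ 4} = {e3, e4} := by
    ext x
    simp [Set.mem_insert_iff, Subtype.ext_iff, he3, he4]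
  have hIm : ∀ x : R, x ∈ I ↔ ∃ a b : R, a * e3 + b * e4 = x := by
    intro x
    rw [hI, hIset, Ideal.mem_span_pair]
  have he3I : e3 ∈ I := (hIm e3).2 ⟨1, 0, by ring⟩
  have he4I : e4 ∈ I := (hIm e4).2 ⟨0, 1, by ring⟩
  -- coefficient computation for products with X 0 ^ n
  have hcm : ∀ (f : MvPowerSeries (Fin 2) k) (n : ℕ) (d : Fin 2 →₀ ℕ),
      coeff d (f * X 0 ^ n) =
        if Finsupp.single 0 n ≤ d then coeff (d - Finsupp.single 0 n) f else 0 := by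
    intro f n d
    rw [X_pow_eq, coeff_mul_monomial]
    split <;> simp
  -- e5 ∉ I
  have he5I : e5 ∉ I := by
    intro h
    obtain ⟨a, b, hab⟩ := (hIm e5).1 h
    have hab' : (a : MvPowerSeries (Fin 2) k) * X 0 ^ 3 + (b : MvPowerSeries (Fin 2) k) * X 0 ^ 4
        = X 0 ^ 5 := by
      have := congrArg (Subtype.val) hab
      simpa [he3, he4, he5] using this
    have := congrArg (coeff (Finsupp.single 0 5)) hab'
    rw [map_add, hcm, hcm, X_pow_eq, coeff_monomial_same] at this
    rw [if_pos (Finsupp.single_le_iff.2 (by simp)), if_pos (Finsupp.single_le_iff.2 (by simp)),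
      show (Finsupp.single (0 : Fin 2) 5 - Finsupp.single 0 3) = Finsupp.single 0 2 by
        ext i; simp [Finsupp.single_apply]; split <;> omega,
      show (Finsupp.single (0 : Fin 2) 5 - Finsupp.single 0 4) = Finsupp.single 0 1 by
        ext i; simp [Finsupp.single_apply]; split <;> omega] at this
    rw [(hR a).1 a.2 _ (by simpa using h2G), (hR b).1 b.2 _ (by simpa using h1G)] at this
    simp at this
  -- key division lemma
  have hkey : ∀ r : R, r * eu ∈ I → r ∈ I := by
    intro r hr
    obtain ⟨a, b, hab⟩ := (hIm _).1 hr
    have hab' : (a : MvPowerSeries (Fin 2) k) * X 0 ^ 3 + (b : MvPowerSeries (Fin 2) k) * X 0 ^ 4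
        = (r : MvPowerSeries (Fin 2) k) * X 1 := by
      have := congrArg (Subtype.val) hab
      simpa [he3, he4, heu] using this
    -- shifted series
    set u1 : Fin 2 →₀ ℕ := Finsupp.single 1 1 with hu1
    set A : MvPowerSeries (Fin 2) k := fun e => coeff (e + u1) (a : MvPowerSeries (Fin 2) k)
      with hA
    set B : MvPowerSeries (Fin 2) k := fun e => coeff (e + u1) (b : MvPowerSeries (Fin 2) k)
      with hB
    have hAc : ∀ e, coeff e A = coeff (e + u1) (a : MvPowerSeries (Fin 2) k) := fun e => rfl
    have hBc : ∀ e, coeff e B = coeff (e + u1) (b : MvPowerSeries (Fin 2) k) := fun e => rfl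
    have hAR : A ∈ R := by
      rw [hR]; intro d hd
      rw [hAc]
      exact (hR _).1 a.2 _ (by simpa [hu1, Finsupp.single_apply] using hd)
    have hBR : B ∈ R := by
      rw [hR]; intro d hd
      rw [hBc]
      exact (hR _).1 b.2 _ (by simpa [hu1, Finsupp.single_apply] using hd)
    have hrAB : (r : MvPowerSeries (Fin 2) k) = A * X 0 ^ 3 + B * X 0 ^ 4 := by
      ext d
      have h1 : coeff d (r : MvPowerSeries (Fin 2) k) =
          coeff (d + u1) ((r : MvPowerSeries (Fin 2) k) * X 1) := by
        rw [show (X 1 : MvPowerSeries (Fin 2) k) = monomial u1 1 by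
          rw [hu1, ← X_pow_eq, pow_one], coeff_add_mul_monomial, mul_one]
      rw [map_add, hcm, hcm, h1, ← hab', map_add, hcm, hcm]
      have hle3 : Finsupp.single (0 : Fin 2) 3 ≤ d + u1 ↔ Finsupp.single (0 : Fin 2) 3 ≤ d := by
        rw [Finsupp.single_le_iff, Finsupp.single_le_iff]
        simp [hu1, Finsupp.single_apply]
      have hle4 : Finsupp.single (0 : Fin 2) 4 ≤ d + u1 ↔ Finsupp.single (0 : Fin 2) 4 ≤ d := by
        rw [Finsupp.single_le_iff, Finsupp.single_le_iff]
        simp [hu1, Finsupp.single_apply]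
      have hsub : ∀ n : ℕ, d + u1 - Finsupp.single (0 : Fin 2) n
          = (d - Finsupp.single (0 : Fin 2) n) + u1 := by
        intro n
        ext i
        fin_cases i <;>
          simp [hu1, Finsupp.single_apply, Finsupp.tsub_apply, Finsupp.add_apply]
      rw [hsub 3, hsub 4]
      by_cases h3 : Finsupp.single (0 : Fin 2) 3 ≤ d
      · rw [if_pos (hle3.2 h3), if_pos h3, hAc]
        by_cases h4 : Finsupp.single (0 : Fin 2) 4 ≤ d
        · rw [if_pos (hle4.2 h4), if_pos h4, hBc]
        · rw [if_neg (fun h => h4 (hle4.1 h)), if_neg h4]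
      · rw [if_neg (fun h => h3 (hle3.1 h)), if_neg h3]
        by_cases h4 : Finsupp.single (0 : Fin 2) 4 ≤ d
        · rw [if_pos (hle4.2 h4), if_pos h4, hBc]
        · rw [if_neg (fun h => h4 (hle4.1 h)), if_neg h4]
    exact (hIm r).2 ⟨⟨A, hAR⟩, ⟨B, hBR⟩, Subtype.ext (by simpa [he3, he4] using hrAB.symm)⟩
  -- eu is in the maximal ideal
  have heuM : eu ∈ maximalIdeal R := by
    rw [mem_maximalIdeal, mem_nonunits_iff]
    intro h
    obtain ⟨v, hv⟩ := h.exists_right_inv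
    have : (X 1 : MvPowerSeries (Fin 2) k) * (v : MvPowerSeries (Fin 2) k) = 1 := by
      have := congrArg (Subtype.val) hv
      simpa [heu] using this
    have := congrArg (constantCoeff) this
    rw [map_mul, constantCoeff_X, zero_mul, map_one] at this
    exact zero_ne_one this
  have husset : {x : R | (x : MvPowerSeries (Fin 2) k) = X 1} = {eu} := by
    ext x
    simp [Subtype.ext_iff, heu]
  constructor
  · apply le_antisymm
    · intro r hr
      have hmem : eu ∈ Ideal.span {x : R | (x : MvPowerSeries (Fin 2) k) = X 1} :=
        Ideal.subset_span (by simp [heu])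
      have := Submodule.mem_colon.1 hr eu hmem
      rw [smul_eq_mul] at this
      exact hkey r (Ideal.mul_le_right this)
    · intro r hr
      rw [Submodule.mem_colon]
      intro p hp
      rw [husset, SetLike.mem_coe, Ideal.mem_span_singleton] at hp
      obtain ⟨c, hc⟩ := hp
      rw [hc, smul_eq_mul, show r * (eu * c) = eu * (c * r) by ring]
      exact Ideal.mul_mem_mul heuM (I.mul_mem_left c hr)
  · intro hIC
    apply he5I
    apply hIC e5
    refine ⟨2, by norm_num, fun i => if i = 2 then -(e4 * (e3 * e3)) else 0, ?_, ?_⟩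
    · intro i h1 h2
      interval_cases i
      · simp
      · simp only [if_pos rfl]
        rw [pow_two]
        exact neg_mem (Ideal.mul_mem_left _ e4 (Ideal.mul_mem_mul he3I he3I))
    · have hsum : Finset.Icc 1 2 = ({1, 2} : Finset ℕ) := rfl
      rw [hsum, Finset.sum_insert (by decide), Finset.sum_singleton]
      simp only [if_neg (by norm_num : (1:ℕ) ≠ 2), if_pos rfl]
      have h2 : e5 * e5 = e4 * (e3 * e3) := by
        apply Subtype.ext
        show (X 0 ^ 5 : MvPowerSeries (Fin 2) k) * X 0 ^ 5 = X 0 ^ 4 * (X 0 ^ 3 * X 0 ^ 3)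
        ring
      rw [pow_two, h2]
      simp
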